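/- Let X be a finite type, let C be a finite subset of X (the candidate set), and let f : Finset X → ℝ be monotone decreasing (S ⊆ T implies f(T) ≤ f(S)) and supermodular. Fix k with 1 ≤ k ≤ |C| and define the greedy sequence S_0 = ∅ and S_{i+1} = S_i ∪ {e_i}, where e_i ∈ C \ S_i attains the maximum of f(S_i) - f(S_i ∪ {e}) over all e ∈ C \ S_i. Then for every subset T ⊆ C with |T| = k: f(∅) - f(S_k) ≥ (1 - 1/e)·(f(∅) - f(T)), where e is Euler's number. -/

import Mathlib

/-- Greedy guarantee for minimizing a monotone decreasing supermodular set function: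
if at each of the `k` steps the greedy sequence `Sg` adds an element of the candidate
set `C` with maximum marginal gain, then for every `T ⊆ C` with `|T| = k`,
`f(∅) - f(S_k) ≥ (1 - 1/e)·(f(∅) - f(T))`. -/
theorem greedy_supermodular_guarantee {X : Type*} [Fintype X] [DecidableEq X]
    (f : Finset X → ℝ)
    (hmono : ∀ S T : Finset X, S ⊆ T → f T ≤ f S)
    (hsuper : ∀ S T : Finset X, S ⊆ T → ∀ a ∉ T,
      f T - f (insert a T) ≤ f S - f (insert a S))
    (C : Finset X) (k : ℕ) (hk1 : 1 ≤ k) (hk2 : k ≤ C.card)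
    (Sg : ℕ → Finset X) (h0 : Sg 0 = ∅)
    (hstep : ∀ i < k, ∃ e ∈ C \ Sg i, Sg (i + 1) = insert e (Sg i) ∧
      ∀ e' ∈ C \ Sg i, f (Sg i) - f (insert e' (Sg i)) ≤ f (Sg i) - f (insert e (Sg i)))
    (T : Finset X) (hT : T ⊆ C) (hTcard : T.card = k) :
    (1 - 1 / Real.exp 1) * (f ∅ - f T) ≤ f ∅ - f (Sg k) := by
  classical
  -- telescoping bound
  have key : ∀ (S A : Finset X), f S - f (S ∪ A) ≤ ∑ e ∈ A, (f S - f (insert e S)) := by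
    intro S A
    induction A using Finset.induction_on with
    | empty => simp
    | insert _ _ ha ih =>
      rename_i a A
      rw [Finset.sum_insert ha]
      by_cases haS : a ∈ S
      · have h1 : S ∪ insert a A = S ∪ A := by
          rw [Finset.union_insert, Finset.insert_eq_self.2 (Finset.mem_union_left _ haS)]
        have h2 : insert a S = S := Finset.insert_eq_self.2 haS
        rw [h1, h2]
        linarith
      · have haSA : a ∉ S ∪ A := by simp [haS, ha]
        have h1 : S ∪ insert a A = insert a (S ∪ A) := Finset.union_insert _ _ _
        have h2 := hsuper S (S ∪ A) Finset.subset_union_left a haSA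
        rw [h1]
        linarith
  set u : ℕ → ℝ := fun i => f (Sg i) - f T with hu
  have hkpos : (0:ℝ) < (k:ℝ) := by positivity
  have hrec : ∀ i < k, u (i + 1) ≤ (1 - 1 / (k:ℝ)) * u i := by
    intro i hi
    obtain ⟨e, he, hSg, hmax⟩ := hstep i hi
    set S := Sg i
    set δ := f S - f (insert e S) with hδ
    have hδ0 : 0 ≤ δ := by
      have := hmono S (insert e S) (Finset.subset_insert _ _)
      linarith
    have hbound : ∀ e' ∈ T, f S - f (insert e' S) ≤ δ := by
      intro e' he'
      by_cases h : e' ∈ S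
      · rw [Finset.insert_eq_self.2 h]; linarith
      · exact hmax e' (Finset.mem_sdiff.2 ⟨hT he', h⟩)
    have hsum : ∑ e' ∈ T, (f S - f (insert e' S)) ≤ (k:ℝ) * δ := by
      calc ∑ e' ∈ T, (f S - f (insert e' S)) ≤ ∑ _e' ∈ T, δ :=
            Finset.sum_le_sum hbound
        _ = (k:ℝ) * δ := by rw [Finset.sum_const, hTcard]; simp
    have hST : f (S ∪ T) ≤ f T := hmono T (S ∪ T) Finset.subset_union_right
    have hkey := key S T
    have hui : u i ≤ (k:ℝ) * δ := by
      simp only [hu]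
      linarith
    have hδui : u i / (k:ℝ) ≤ δ := by
      rw [div_le_iff₀ hkpos] at *
      nlinarith
    have : u (i + 1) = u i - δ := by simp only [hu, hSg]; ring
    rw [this]
    have : (1 - 1 / (k:ℝ)) * u i = u i - u i / k := by ring
    linarith
  have hfac0 : 0 ≤ 1 - 1 / (k:ℝ) := by
    have : 1 / (k:ℝ) ≤ 1 := by
      rw [div_le_one hkpos]; exact_mod_cast hk1
    linarith
  have hind : ∀ i ≤ k, u i ≤ (1 - 1 / (k:ℝ)) ^ i * u 0 := by
    intro i hi
    induction i with
    | zero => simp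
    | succ n ihn =>
      have hn : n < k := Nat.lt_of_succ_le hi
      calc u (n + 1) ≤ (1 - 1 / (k:ℝ)) * u n := hrec n hn
        _ ≤ (1 - 1 / (k:ℝ)) * ((1 - 1 / (k:ℝ)) ^ n * u 0) :=
            mul_le_mul_of_nonneg_left (ihn (le_of_lt hn)) hfac0
        _ = (1 - 1 / (k:ℝ)) ^ (n + 1) * u 0 := by ring
  have hexp : (1 - 1 / (k:ℝ)) ^ k ≤ Real.exp (-1) := by
    have h1 : 1 - 1 / (k:ℝ) ≤ Real.exp (-(1 / (k:ℝ))) := by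
      have := Real.add_one_le_exp (-(1 / (k:ℝ)))
      linarith
    calc (1 - 1 / (k:ℝ)) ^ k ≤ (Real.exp (-(1 / (k:ℝ)))) ^ k :=
          pow_le_pow_left₀ hfac0 h1 k
      _ = Real.exp ((k:ℝ) * (-(1 / (k:ℝ)))) := by rw [← Real.exp_nat_mul]
      _ = Real.exp (-1) := by
          congr 1
          field_simp
  have hu0 : 0 ≤ u 0 := by
    have := hmono ∅ T (Finset.empty_subset T)
    simp only [hu, h0]
    linarith
  have hexp0 : 0 ≤ Real.exp (-1) := le_of_lt (Real.exp_pos _)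
  have huk : u k ≤ Real.exp (-1) * u 0 := by
    calc u k ≤ (1 - 1 / (k:ℝ)) ^ k * u 0 := hind k le_rfl
      _ ≤ Real.exp (-1) * u 0 := mul_le_mul_of_nonneg_right hexp hu0
  have hinv : 1 / Real.exp 1 = Real.exp (-1) := by
    rw [Real.exp_neg]; exact one_div _
  have hgoal : f ∅ - f (Sg k) = u 0 - u k := by
    simp only [hu, h0]
    ring
  have hu0eq : f ∅ - f T = u 0 := by simp only [hu, h0]
  rw [hgoal, hinv, hu0eq]
  nlinarith
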